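/- For every ε ≥ 0 and μ > 0, define δ(ε) = Φ(−ε/μ + μ/2) − e^ε Φ(−ε/μ − μ/2). Then δ(ε) ∈ [0,1], δ is non-increasing in ε, and δ(ε) → 0 as ε → ∞. -/

import Mathlib

open MeasureTheory ProbabilityTheory Filter

/-- Standard normal CDF. -/
noncomputable def Phi (x : ℝ) : ℝ := ((gaussianReal 0 1) (Set.Iic x)).toReal

/-- The privacy profile `δ(ε)` implied by `μ`-GDP. -/
noncomputable def deltaGDP (μ ε : ℝ) : ℝ :=
  Phi (-ε / μ + μ / 2) - Real.exp ε * Phi (-ε / μ - μ / 2)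

lemma Phi_eq_cdf (x : ℝ) : Phi x = ProbabilityTheory.cdf (gaussianReal 0 1) x :=
  (ProbabilityTheory.cdf_eq_real _ x).symm

lemma Phi_integral (x : ℝ) : Phi x = ∫ t in Set.Iic x, gaussianPDFReal 0 1 t := by
  rw [Phi, gaussianReal_apply_eq_integral 0 one_ne_zero,
    ENNReal.toReal_ofReal (setIntegral_nonneg measurableSet_Iic
      fun t _ => gaussianPDFReal_nonneg 0 1 t)]

lemma Phi_shift (c m : ℝ) : Phi (c - m) = ∫ t in Set.Iic c, gaussianPDFReal m 1 t := by
  have h : gaussianReal 0 1 (Set.Iic (c - m)) = gaussianReal m 1 (Set.Iic c) := by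
    have hmap := gaussianReal_map_add_const (μ := 0) (v := 1) m
    rw [zero_add] at hmap
    rw [← hmap, Measure.map_apply (measurable_add_const m) measurableSet_Iic]
    congr 1
    ext t
    simp [sub_eq_iff_eq_add, le_sub_iff_add_le]
  rw [Phi, h, gaussianReal_apply_eq_integral m one_ne_zero,
    ENNReal.toReal_ofReal (setIntegral_nonneg measurableSet_Iic
      fun t _ => gaussianPDFReal_nonneg m 1 t)]

lemma gdp_pointwise {μ ε t : ℝ} (hμ : 0 < μ) (ht : t ≤ -ε / μ + μ / 2) :
    Real.exp ε * gaussianPDFReal μ 1 t ≤ gaussianPDFReal 0 1 t := by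
  simp only [gaussianPDFReal, NNReal.coe_one, mul_one, sub_zero]
  rw [mul_comm (Real.exp ε) _, mul_assoc, ← Real.exp_add]
  refine mul_le_mul_of_nonneg_left ?_ (by positivity)
  rw [Real.exp_le_exp]
  have h : μ * t ≤ -ε + μ * μ / 2 := by
    have h1 := mul_le_mul_of_nonneg_left ht hμ.le
    have h2 : μ * (-ε / μ + μ / 2) = -ε + μ * μ / 2 := by
      field_simp
    linarith [h2 ▸ h1]
  have h2 : (0:ℝ) < 2 := by norm_num
  rw [div_add' _ _ _ (by norm_num : (2:ℝ) ≠ 0), div_le_div_iff₀ h2 h2]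
  nlinarith

lemma deltaGDP_integral {μ : ℝ} (hμ : 0 < μ) (ε : ℝ) :
    deltaGDP μ ε = ∫ t in Set.Iic (-ε / μ + μ / 2),
      (gaussianPDFReal 0 1 t - Real.exp ε * gaussianPDFReal μ 1 t) := by
  have ha : -ε / μ - μ / 2 = (-ε / μ + μ / 2) - μ := by ring
  rw [deltaGDP, ha, Phi_shift, Phi_integral,
    integral_sub ((integrable_gaussianPDFReal 0 1).integrableOn)
      (((integrable_gaussianPDFReal μ 1).const_mul _).integrableOn),
    integral_const_mul]

lemma deltaGDP_nonneg {μ : ℝ} (hμ : 0 < μ) (ε : ℝ) : 0 ≤ deltaGDP μ ε := by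
  rw [deltaGDP_integral hμ ε]
  exact setIntegral_nonneg measurableSet_Iic fun t ht =>
    sub_nonneg.2 (gdp_pointwise hμ ht)

lemma Phi_nonneg (x : ℝ) : 0 ≤ Phi x := ENNReal.toReal_nonneg

lemma deltaGDP_le_Phi {μ : ℝ} (ε : ℝ) :
    deltaGDP μ ε ≤ Phi (-ε / μ + μ / 2) :=
  sub_le_self _ (mul_nonneg (Real.exp_pos ε).le (Phi_nonneg _))

/-- basic properties of the GDP privacy profile `δ(ε)`:
it takes values in `[0,1]`, is non-increasing in `ε`, and tends to `0` as `ε → ∞`. -/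
theorem deltaGDP_properties (μ : ℝ) (hμ : 0 < μ) :
    (∀ ε : ℝ, 0 ≤ ε → deltaGDP μ ε ∈ Set.Icc (0 : ℝ) 1) ∧
    (∀ ε₁ ε₂ : ℝ, 0 ≤ ε₁ → ε₁ ≤ ε₂ → deltaGDP μ ε₂ ≤ deltaGDP μ ε₁) ∧
    Tendsto (deltaGDP μ) atTop (nhds 0) := by
  refine ⟨fun ε _ => ⟨deltaGDP_nonneg hμ ε, ?_⟩, fun ε₁ ε₂ _ h12 => ?_, ?_⟩
  · calc deltaGDP μ ε ≤ Phi (-ε / μ + μ / 2) := deltaGDP_le_Phi ε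
      _ ≤ 1 := by rw [Phi_eq_cdf]; exact ProbabilityTheory.cdf_le_one _ _
  · -- monotonicity
    rw [deltaGDP_integral hμ ε₁, deltaGDP_integral hμ ε₂]
    have hb : -ε₂ / μ + μ / 2 ≤ -ε₁ / μ + μ / 2 := by
      gcongr
    have I1 : Integrable (fun t => gaussianPDFReal 0 1 t - Real.exp ε₁ * gaussianPDFReal μ 1 t) :=
      (integrable_gaussianPDFReal 0 1).sub ((integrable_gaussianPDFReal μ 1).const_mul _)
    have I2 : Integrable (fun t => gaussianPDFReal 0 1 t - Real.exp ε₂ * gaussianPDFReal μ 1 t) :=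
      (integrable_gaussianPDFReal 0 1).sub ((integrable_gaussianPDFReal μ 1).const_mul _)
    calc ∫ t in Set.Iic (-ε₂ / μ + μ / 2),
            (gaussianPDFReal 0 1 t - Real.exp ε₂ * gaussianPDFReal μ 1 t)
        ≤ ∫ t in Set.Iic (-ε₂ / μ + μ / 2),
            (gaussianPDFReal 0 1 t - Real.exp ε₁ * gaussianPDFReal μ 1 t) := by
          refine setIntegral_mono I2.integrableOn I1.integrableOn fun t => ?_
          have := gaussianPDFReal_nonneg μ 1 t
          have hexp := Real.exp_le_exp.2 h12
          nlinarith
      _ ≤ ∫ t in Set.Iic (-ε₁ / μ + μ / 2),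
            (gaussianPDFReal 0 1 t - Real.exp ε₁ * gaussianPDFReal μ 1 t) := by
          refine setIntegral_mono_set I1.integrableOn ?_
            (HasSubset.Subset.eventuallyLE (Set.Iic_subset_Iic.2 hb))
          filter_upwards [ae_restrict_mem measurableSet_Iic] with t ht
          exact sub_nonneg.2 (gdp_pointwise hμ ht)
  · -- limit
    have hPhi : Tendsto Phi atBot (nhds 0) := by
      have := ProbabilityTheory.tendsto_cdf_atBot (gaussianReal 0 1)
      exact this.congr fun x => (Phi_eq_cdf x).symm
    have hlin : Tendsto (fun ε : ℝ => -ε / μ + μ / 2) atTop atBot := by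
      apply Filter.tendsto_atBot_add_const_right
      simp only [neg_div]
      exact tendsto_neg_atBot_iff.2 (tendsto_id.atTop_div_const hμ)
    refine tendsto_of_tendsto_of_tendsto_of_le_of_le tendsto_const_nhds
      (hPhi.comp hlin) (fun ε => deltaGDP_nonneg hμ ε) (fun ε => deltaGDP_le_Phi ε)
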